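/- The three-qubit Toffoli gate T₃ = S₀⊗I₂⊗I₂ + S₃⊗S₀⊗I₂ + S₃⊗S₃⊗σ₁ (an 8×8 complex matrix) has Schmidt rank exactly 2. -/

import Mathlib

open Matrix Kronecker Complex

/-- The tripartite Schmidt rank of an 8×8 complex matrix, viewed as a matrix on
ℂ² ⊗ ℂ² ⊗ ℂ² via Kronecker products: the least `r` such that
`U = ∑ j, A j ⊗ₖ (B j ⊗ₖ C j)` with 2×2 matrices `A j`, `B j`, `C j`. -/
noncomputable def sr (U : Matrix (Fin 2 × Fin 2 × Fin 2) (Fin 2 × Fin 2 × Fin 2) ℂ) : ℕ :=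
  sInf {r | ∃ A B C : Fin r → Matrix (Fin 2) (Fin 2) ℂ,
    U = ∑ j, A j ⊗ₖ (B j ⊗ₖ C j)}

def S0 : Matrix (Fin 2) (Fin 2) ℂ := !![1, 0; 0, 0]
def S1 : Matrix (Fin 2) (Fin 2) ℂ := !![0, 1; 0, 0]
def S2 : Matrix (Fin 2) (Fin 2) ℂ := !![0, 0; 1, 0]
def S3 : Matrix (Fin 2) (Fin 2) ℂ := !![0, 0; 0, 1]
def σ1 : Matrix (Fin 2) (Fin 2) ℂ := !![0, 1; 1, 0]
def σ2 : Matrix (Fin 2) (Fin 2) ℂ := !![0, -I; I, 0]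
def σ3 : Matrix (Fin 2) (Fin 2) ℂ := !![1, 0; 0, -1]
def I2 : Matrix (Fin 2) (Fin 2) ℂ := 1

noncomputable def T₃ : Matrix (Fin 2 × Fin 2 × Fin 2) (Fin 2 × Fin 2 × Fin 2) ℂ :=
  S0 ⊗ₖ (I2 ⊗ₖ I2) + S3 ⊗ₖ (S0 ⊗ₖ I2) + S3 ⊗ₖ (S3 ⊗ₖ σ1)

lemma two_mem : (2 : ℕ) ∈ {r | ∃ A B C : Fin r → Matrix (Fin 2) (Fin 2) ℂ,
    T₃ = ∑ j, A j ⊗ₖ (B j ⊗ₖ C j)} := by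
  refine ⟨![I2, S3], ![I2, S3], ![I2, σ1 - I2], ?_⟩
  ext ⟨i1, i2, i3⟩ ⟨j1, j2, j3⟩
  simp only [T₃, Fin.sum_univ_two, Matrix.add_apply, Matrix.kroneckerMap_apply,
    Matrix.cons_val_zero, Matrix.cons_val_one, Matrix.head_cons, Matrix.sub_apply]
  fin_cases i1 <;> fin_cases i2 <;> fin_cases i3 <;>
    fin_cases j1 <;> fin_cases j2 <;> fin_cases j3 <;>
  simp [S0, S3, σ1, I2, Matrix.one_apply]

theorem stmt11 : sr T₃ = 2 := by
  have hmem := two_mem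
  refine le_antisymm (Nat.sInf_le hmem) (le_csInf ⟨2, hmem⟩ ?_)
  rintro m ⟨A, B, C, h⟩
  by_contra hlt
  push_neg at hlt
  interval_cases m
  · have h1 := congrArg (fun M => M ((0 : Fin 2), (0 : Fin 2), (0 : Fin 2))
      ((0 : Fin 2), (0 : Fin 2), (0 : Fin 2))) h
    simp [T₃, S0, S3, σ1, I2, Matrix.one_apply, Prod.mk.injEq] at h1
  · have e : ∀ p q : Fin 2 × Fin 2 × Fin 2, T₃ p q =
        A 0 p.1 q.1 * (B 0 p.2.1 q.2.1 * C 0 p.2.2 q.2.2) := by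
      intro p q
      have := congrArg (fun M => M p q) h
      simpa [Fin.sum_univ_one, Matrix.kroneckerMap_apply] using this
    have h1 := e (0, 0, 0) (0, 0, 0)
    have h2 := e (0, 0, 0) (0, 0, 1)
    have h3 := e (1, 1, 0) (1, 1, 1)
    simp [T₃, S0, S3, σ1, I2, Matrix.one_apply, Prod.mk.injEq] at h1 h2 h3
    -- h1 : 1 = A00 * (B00 * C00), h2 : 0 = A00 * (B00 * C01), h3 : 1 = A11 * (B11 * C01)
    have hA : A 0 0 0 * B 0 0 0 ≠ 0 := by
      intro hz
      rw [← mul_assoc, hz, zero_mul] at h1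
      norm_num at h1
    have hC : C 0 0 1 = 0 := by
      rcases h2 with hz | hz | hz
      · exact absurd (by rw [hz, zero_mul]) hA
      · exact absurd (by rw [hz, mul_zero]) hA
      · exact hz
    rw [hC, mul_zero, mul_zero] at h3
    norm_num at h3
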